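/- Let E be a real inner product space, k a natural number, and B : ℝᵏ → E an injective linear map. Then there exist a unique linear map p : ℝᵏ → E preserving inner products (i.e. ⟨p(x), p(y)⟩ = ⟨x, y⟩ for all x, y, where ℝᵏ carries the Euclidean inner product) and a unique upper triangular k × k real matrix q with strictly positive diagonal entries such that B(x) = p(q·x) for all x ∈ ℝᵏ. (Iwasawa/QR decomposition: GL(k,∞) = O(k,∞)·T(k).) -/

import Mathlib

open scoped RealInnerProductSpace

open Finset

section aux

variable {E : Type*} [NormedAddCommGroup E] [InnerProductSpace ℝ E] {k : ℕ}

theorem gs_unique (u u' : Fin k → E) (hu : Orthonormal ℝ u) (hu' : Orthonormal ℝ u')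
    (q q' : Matrix (Fin k) (Fin k) ℝ)
    (htri : ∀ i j : Fin k, j < i → q i j = 0) (htri' : ∀ i j : Fin k, j < i → q' i j = 0)
    (hpos : ∀ i, 0 < q i i) (hpos' : ∀ i, 0 < q' i i)
    (hsum : ∀ j, ∑ i, q i j • u i = ∑ i, q' i j • u' i) :
    u = u' ∧ q = q' := by
  have key : ∀ n : ℕ, ∀ j : Fin k, (j : ℕ) < n → (u j = u' j ∧ ∀ i, q i j = q' i j) := by
    intro n
    induction n with
    | zero => intro j hj; omega
    | succ n IH =>
      intro j hj
      have ih : ∀ l : Fin k, l < j → u l = u' l ∧ ∀ i, q i l = q' i l := by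
        intro l hl
        exact IH l (by have := Fin.lt_def.mp hl; omega)
      -- coefficients below the diagonal agree
      have hlow : ∀ i : Fin k, i < j → q i j = q' i j := by
        intro i hij
        have h1 : ⟪u i, ∑ t, q t j • u t⟫ = q i j := hu.inner_right_fintype _ i
        have h2 : ⟪u' i, ∑ t, q' t j • u' t⟫ = q' i j := hu'.inner_right_fintype _ i
        rw [hsum j, (ih i hij).1] at h1
        rw [h1] at h2
        exact h2
      -- inner products with the diagonal
      have hq : q j j = q' j j * ⟪u j, u' j⟫ := by
        have h1 : ⟪u j, ∑ t, q t j • u t⟫ = q j j := hu.inner_right_fintype _ j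
        rw [hsum j, inner_sum] at h1
        rw [← h1]
        rw [Finset.sum_eq_single j]
        · rw [real_inner_smul_right]
        · intro t _ htj
          rcases lt_or_gt_of_ne htj with h | h
          · rw [real_inner_smul_right, ← (ih t h).1, hu.2 h.ne', mul_zero]
          · rw [htri' t j h, zero_smul, inner_zero_right]
        · simp
      have hq' : q' j j = q j j * ⟪u j, u' j⟫ := by
        have h1 : ⟪∑ t, q t j • u t, u' j⟫ = q' j j := by
          rw [hsum j]
          simpa using hu'.inner_left_fintype (fun t => q' t j) j
        rw [← h1, sum_inner]
        rw [Finset.sum_eq_single j]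
        · rw [real_inner_smul_left]
        · intro t _ htj
          rcases lt_or_gt_of_ne htj with h | h
          · rw [real_inner_smul_left, (ih t h).1, hu'.2 h.ne, mul_zero]
          · rw [htri t j h, zero_smul, inner_zero_left]
        · simp
      set c := ⟪u j, u' j⟫ with hc
      have hqne : q j j ≠ 0 := (hpos j).ne'
      have hcc : q j j * (c * c) = q j j * 1 := by
        rw [mul_one]
        nth_rewrite 2 [hq]
        rw [hq']
        ring
      have hc2 : c * c = 1 := mul_left_cancel₀ hqne hcc
      have hcpos : c = 1 := by
        rcases mul_self_eq_one_iff.mp hc2 with h | h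
        · exact h
        · exfalso
          rw [h, mul_neg_one] at hq
          nlinarith [hpos j, hpos' j]
      have hdiag : q j j = q' j j := by rw [hq, hcpos, mul_one]
      have huj : u j = u' j := by
        have h1 : ⟪u j, u j⟫ = (1 : ℝ) := by
          rw [real_inner_self_eq_norm_sq, hu.1 j]; norm_num
        have h2 : ⟪u' j, u' j⟫ = (1 : ℝ) := by
          rw [real_inner_self_eq_norm_sq, hu'.1 j]; norm_num
        have h3 : ⟪u' j, u j⟫ = c := real_inner_comm _ _
        have hnorm : ⟪u j - u' j, u j - u' j⟫ = 0 := by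
          rw [inner_sub_left, inner_sub_right, inner_sub_right, h1, h2, h3, ← hc, hcpos]
          ring
        exact sub_eq_zero.mp (inner_self_eq_zero.mp hnorm)
      refine ⟨huj, fun i => ?_⟩
      rcases lt_trichotomy i j with h | h | h
      · exact hlow i h
      · rw [h]; exact hdiag
      · rw [htri i j h, htri' i j h]
  constructor
  · funext j; exact (key k j j.isLt).1
  · ext i j; exact (key k j j.isLt).2 i

end aux

/-- Iwasawa (QR) decomposition: every injective linear map `B : ℝᵏ → E` factors
uniquely as `B = p ∘ q` with `p` inner-product preserving and `q` upper triangular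
with positive diagonal entries. -/
theorem iwasawa_decomposition {E : Type*}
    [NormedAddCommGroup E] [InnerProductSpace ℝ E]
    (k : ℕ) (B : (Fin k → ℝ) →ₗ[ℝ] E) (hB : Function.Injective B) :
    ∃! pq : ((Fin k → ℝ) →ₗ[ℝ] E) × Matrix (Fin k) (Fin k) ℝ,
      (∀ x y : Fin k → ℝ, ⟪pq.1 x, pq.1 y⟫ = ∑ i, x i * y i) ∧
      (∀ i j : Fin k, j < i → pq.2 i j = 0) ∧
      (∀ i : Fin k, 0 < pq.2 i i) ∧
      (∀ x : Fin k → ℝ, B x = pq.1 (pq.2.mulVec x)) := by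
  classical
  haveI : WellFoundedLT (Fin k) := inferInstance
  set v : Fin k → E := fun i => B (Pi.single i 1) with hv_def
  have hv : LinearIndependent ℝ v := by
    have h1 : LinearIndependent ℝ (fun i : Fin k => Pi.single i (1:ℝ)) := by
      have h0 := (Pi.basisFun ℝ (Fin k)).linearIndependent
      have h2 : (⇑(Pi.basisFun ℝ (Fin k)) : Fin k → (Fin k → ℝ))
          = fun i => Pi.single i 1 := funext fun i => Pi.basisFun_apply ..
      rwa [h2] at h0
    exact h1.map' B (LinearMap.ker_eq_bot.mpr hB)
  set g : Fin k → E := InnerProductSpace.gramSchmidt ℝ v with hg_def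
  set u : Fin k → E := InnerProductSpace.gramSchmidtNormed ℝ v with hu_def
  have hu : Orthonormal ℝ u := by rw [hu_def]; exact InnerProductSpace.gramSchmidtNormed_orthonormal hv
  have hg_ne : ∀ i, g i ≠ 0 := fun i => InnerProductSpace.gramSchmidt_ne_zero i hv
  have hgnorm_ne : ∀ i, ‖g i‖ ≠ 0 := fun i => norm_ne_zero_iff.mpr (hg_ne i)
  have hu_eq : ∀ i, u i = (‖g i‖)⁻¹ • g i := by
    intro i
    simp [hu_def, InnerProductSpace.gramSchmidtNormed, hg_def]
  -- inner product of g i with v i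
  have hinner_self : ∀ i, ⟪g i, v i⟫ = ‖g i‖ ^ 2 := by
    intro i
    conv_lhs => rw [show v i = g i + ∑ t ∈ Finset.Iio i,
      (⟪g t, v i⟫ / (‖g t‖:ℝ) ^ 2) • g t from InnerProductSpace.gramSchmidt_def'' ℝ v i]
    rw [inner_add_right, inner_sum, real_inner_self_eq_norm_sq]
    have : ∑ t ∈ Finset.Iio i, ⟪g i, (⟪g t, v i⟫ / (‖g t‖:ℝ) ^ 2) • g t⟫ = 0 :=
      Finset.sum_eq_zero fun t ht => by
        rw [real_inner_smul_right, InnerProductSpace.gramSchmidt_orthogonal ℝ v (Finset.mem_Iio.mp ht).ne',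
          mul_zero]
    rw [this, add_zero]
  -- the matrix q
  set q : Matrix (Fin k) (Fin k) ℝ := Matrix.of fun i j => ⟪u i, v j⟫ with hq_def
  have hq_apply : ∀ i j, q i j = ⟪u i, v j⟫ := fun i j => rfl
  have htri : ∀ i j : Fin k, j < i → q i j = 0 := by
    intro i j hij
    rw [hq_apply, hu_eq, real_inner_smul_left, InnerProductSpace.gramSchmidt_inv_triangular ℝ v hij, mul_zero]
  have hdiagpos : ∀ i : Fin k, 0 < q i i := by
    intro i
    rw [hq_apply, hu_eq, real_inner_smul_left, hinner_self]
    have : (‖g i‖)⁻¹ * ‖g i‖ ^ 2 = ‖g i‖ := by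
      rw [sq, ← mul_assoc, inv_mul_cancel₀ (hgnorm_ne i), one_mul]
    rw [this]
    exact (norm_pos_iff.mpr (hg_ne i))
  -- expansion of v j in terms of u
  have hexp : ∀ j, v j = ∑ i, q i j • u i := by
    intro j
    have step1 : ∀ i : Fin k, q i j • u i = (⟪g i, v j⟫ / ‖g i‖ ^ 2) • g i := by
      intro i
      rw [hq_apply, hu_eq, real_inner_smul_left, smul_smul]
      congr 1
      field_simp
    calc v j = g j + ∑ t ∈ Finset.Iio j, (⟪g t, v j⟫ / (‖g t‖:ℝ) ^ 2) • g t :=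
          InnerProductSpace.gramSchmidt_def'' ℝ v j
      _ = ∑ i ∈ Finset.Iic j, (⟪g i, v j⟫ / ‖g i‖ ^ 2) • g i := by
          rw [← Finset.Iio_insert, Finset.sum_insert Finset.notMem_Iio_self]
          congr 1
          rw [hinner_self, div_self (pow_ne_zero 2 (hgnorm_ne j)), one_smul]
      _ = ∑ i, (⟪g i, v j⟫ / ‖g i‖ ^ 2) • g i := by
          apply Finset.sum_subset (Finset.subset_univ _)
          intro i _ hi
          have hji : j < i := by simpa using hi
          rw [InnerProductSpace.gramSchmidt_inv_triangular ℝ v hji, zero_div, zero_smul]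
      _ = ∑ i, q i j • u i := by
          exact Finset.sum_congr rfl fun i _ => (step1 i).symm
  -- the isometric linear map p
  set p : (Fin k → ℝ) →ₗ[ℝ] E := Fintype.linearCombination ℝ u with hp_def
  have hp_apply : ∀ x : Fin k → ℝ, p x = ∑ i, x i • u i := fun x => rfl
  have hp_inner : ∀ x y : Fin k → ℝ, ⟪p x, p y⟫ = ∑ i, x i * y i := by
    intro x y
    rw [hp_apply, hp_apply]
    simpa using hu.inner_sum x y Finset.univ
  have hp_single : ∀ i, p (Pi.single i 1) = u i := by
    intro i
    rw [hp_apply]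
    simp [Pi.single_apply, ite_smul]
  -- factorization
  have hfac : ∀ x : Fin k → ℝ, B x = p (q.mulVec x) := by
    intro x
    have hx : x = ∑ j, x j • (Pi.single j 1 : Fin k → ℝ) := by
      funext t
      simp [Pi.single_apply]
    calc B x = B (∑ j, x j • (Pi.single j 1 : Fin k → ℝ)) := by rw [← hx]
      _ = ∑ j, x j • v j := by
          rw [map_sum]
          exact Finset.sum_congr rfl fun j _ => by rw [map_smul]
      _ = ∑ j, x j • ∑ i, q i j • u i := by
          exact Finset.sum_congr rfl fun j _ => by rw [← hexp]
      _ = ∑ i, (∑ j, q i j * x j) • u i := by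
          simp_rw [Finset.smul_sum, smul_smul, Finset.sum_smul]
          rw [Finset.sum_comm]
          exact Finset.sum_congr rfl fun i _ => Finset.sum_congr rfl fun j _ => by
            rw [mul_comm]
      _ = p (q.mulVec x) := by
          rw [hp_apply]
          exact Finset.sum_congr rfl fun i _ => by rw [Matrix.mulVec]; rfl
  refine ⟨⟨p, q⟩, ⟨hp_inner, htri, hdiagpos, hfac⟩, ?_⟩
  -- uniqueness
  rintro ⟨p', q'⟩ ⟨hp'_inner, htri', hdiagpos', hfac'⟩
  set u' : Fin k → E := fun i => p' (Pi.single i 1) with hu'_def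
  have hu' : Orthonormal ℝ u' := by
    rw [orthonormal_iff_ite]
    intro i j
    rw [hu'_def]
    simp only []
    rw [hp'_inner]
    simp [Pi.single_apply, eq_comm]
  have hp'_apply : ∀ x : Fin k → ℝ, p' x = ∑ i, x i • u' i := by
    intro x
    have hx : x = ∑ j, x j • (Pi.single j 1 : Fin k → ℝ) := by
      funext t
      simp [Pi.single_apply]
    conv_lhs => rw [hx]
    rw [map_sum]
    exact Finset.sum_congr rfl fun j _ => by rw [map_smul]
  have hsum : ∀ j, ∑ i, q i j • u i = ∑ i, q' i j • u' i := by
    intro j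
    rw [← hexp j, hv_def]
    simp only []
    rw [hfac' (Pi.single j 1), Matrix.mulVec_single, hp'_apply]
    exact Finset.sum_congr rfl fun i _ => by simp
  obtain ⟨huu', hqq'⟩ := gs_unique u u' hu hu' q q' htri htri' hdiagpos hdiagpos' hsum
  have hpp' : p' = p := by
    apply LinearMap.pi_ext
    intro i x
    have h1 : (Pi.single i x : Fin k → ℝ) = x • (Pi.single i 1 : Fin k → ℝ) := by
      funext t
      simp [Pi.single_apply, mul_comm]
    rw [h1, map_smul, map_smul, hp_single, huu']
  exact Prod.ext hpp' hqq'.symm
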